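/- Let p(t) ∈ ℚ[t]. Then p admits a Macaulay–Hartshorne expression (i.e., there exist integers e_0 ≥ e_1 ≥ … ≥ e_d > 0 with p(t) = Σ_{i=0}^d [C(t+i, i+1) − C(t+i−e_i, i+1)]) if and only if p admits a Gotzmann expression (i.e., there exist integers b_1 ≥ b_2 ≥ … ≥ b_r ≥ 0 with p(t) = Σ_{j=1}^r C(t + b_j − (j−1), b_j)). Moreover, each expression is unique: if two nonincreasing sequences of positive integers give equal Macaulay–Hartshorne expressions then the sequences are equal, and if two nonincreasing sequences of nonnegative integers give equal Gotzmann expressions then the sequences are equal. -/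

import Mathlib

/-- The polynomial binomial coefficient `C(t+a, b) ∈ ℚ[t]`, equal to
`(t+a)(t+a−1)⋯(t+a−b+1)/b!` if `b ≥ 0` and `0` if `b < 0`. -/
noncomputable def polyBinom (a b : ℤ) : Polynomial ℚ :=
  if 0 ≤ b then
    (Nat.factorial b.toNat : ℚ)⁻¹ •
      (descPochhammer ℚ b.toNat).comp (Polynomial.X + Polynomial.C (a : ℚ))
  else 0

/-- The Gotzmann expression `Σ_{j=1}^r C(t + b_j − (j−1), b_j)` (here `j : Fin r` is
the 0-indexed version of `j-1`). -/
noncomputable def gotzmannSum (r : ℕ) (b : Fin r → ℤ) : Polynomial ℚ :=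
  ∑ j : Fin r, polyBinom (b j - ((j : ℕ) : ℤ)) (b j)

/-- The Macaulay–Hartshorne expression `Σ_{i=0}^d [C(t+i, i+1) − C(t+i−e_i, i+1)]`. -/
noncomputable def mhSum (d : ℕ) (e : Fin (d + 1) → ℤ) : Polynomial ℚ :=
  ∑ i : Fin (d + 1),
    (polyBinom ((i : ℕ) : ℤ) (((i : ℕ) : ℤ) + 1) -
      polyBinom (((i : ℕ) : ℤ) - e i) (((i : ℕ) : ℤ) + 1))

open Polynomial Finset

lemma polyBinom_of_neg {a b : ℤ} (h : b < 0) : polyBinom a b = 0 := by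
  simp [polyBinom, not_le.mpr h]

lemma polyBinom_zero (a : ℤ) : polyBinom a 0 = 1 := by
  simp [polyBinom]

lemma polyBinom_pascal (a b : ℤ) :
    polyBinom a b = polyBinom (a - 1) b + polyBinom (a - 1) (b - 1) := by
  rcases lt_trichotomy b 0 with hb | rfl | hb
  · rw [polyBinom_of_neg hb, polyBinom_of_neg hb, polyBinom_of_neg (by omega)]; ring
  · rw [polyBinom_zero, polyBinom_zero, polyBinom_of_neg (by omega)]; ring
  · obtain ⟨k, hk⟩ : ∃ k : ℕ, b = (k : ℤ) + 1 := ⟨(b - 1).toNat, by omega⟩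
    subst hk
    have h1 : ((k:ℤ) + 1).toNat = k + 1 := by omega
    have h2 : ((k:ℤ) + 1 - 1).toNat = k := by omega
    rw [polyBinom, polyBinom, polyBinom, if_pos (by omega), if_pos (by omega),
      if_pos (by omega), h1, h2]
    have ecast : ((a - 1 : ℤ) : ℚ) = (a:ℚ) - 1 := by push_cast; ring
    rw [ecast]
    set Q : Polynomial ℚ := (descPochhammer ℚ k).comp (X + C ((a:ℚ) - 1)) with hQ
    have e1 : (descPochhammer ℚ (k+1)).comp (X + C (a:ℚ)) = (X + C (a:ℚ)) * Q := by
      rw [descPochhammer_succ_left, mul_comp, X_comp, comp_assoc, sub_comp, X_comp, one_comp, hQ]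
      simp only [map_sub, map_one]
      ring
    have e2 : (descPochhammer ℚ (k+1)).comp (X + C ((a:ℚ) - 1)) = Q * (X + C ((a:ℚ) - 1 - k)) := by
      rw [descPochhammer_succ_right, mul_comp, sub_comp, X_comp, natCast_comp, hQ]
      simp only [map_sub, map_one, Polynomial.C_eq_natCast]
      ring
    rw [e1, e2]
    have h4 : (k.factorial : ℚ)⁻¹ = ((k+1).factorial:ℚ)⁻¹ * ((k:ℚ)+1) := by
      rw [Nat.factorial_succ]
      push_cast
      rw [mul_inv]
      field_simp
    rw [h4, mul_smul (((k+1).factorial:ℚ)⁻¹) (((k:ℚ)+1))]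
    rw [← smul_add]
    congr 1
    rw [smul_eq_C_mul]
    simp only [map_sub, map_add, map_one, Polynomial.C_eq_natCast]
    ring

lemma polyBinom_telescope (i : ℤ) (e : ℕ) :
    polyBinom i (i+1) - polyBinom (i - e) (i+1) =
      ∑ k ∈ range e, polyBinom (i - ((k:ℤ)+1)) i := by
  induction e with
  | zero => simp
  | succ n ih =>
    rw [Finset.sum_range_succ, ← ih]
    have := polyBinom_pascal (i - n) (i + 1)
    have h1 : i - (n:ℤ) - 1 = i - ((n:ℤ)+1) := by ring
    have h2 : i + 1 - 1 = i := by ring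
    rw [h1, h2] at this
    push_cast
    rw [show i - ((n:ℤ)+1) = i - (n:ℤ) - 1 from by ring] at *
    rw [this]
    ring

lemma polyBinom_hockey (c : ℤ) (m : ℕ) :
    ∑ k ∈ range m, polyBinom ((k:ℤ) + c) k = polyBinom ((m:ℤ) + c) ((m:ℤ) - 1) := by
  induction m with
  | zero => simp [polyBinom_of_neg]
  | succ n ih =>
    rw [Finset.sum_range_succ, ih]
    have := polyBinom_pascal (((n:ℤ)+1) + c) (n:ℤ)
    push_cast
    rw [show (n:ℤ) + 1 + c - 1 = (n:ℤ) + c from by ring] at this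
    rw [show (n:ℤ) + 1 - 1 = (n:ℤ) from by ring, this]
    ring

lemma polyBinom_natDegree_le (a b : ℤ) : (polyBinom a b).natDegree ≤ b.toNat := by
  unfold polyBinom
  split
  · refine le_trans (natDegree_smul_le _ _) ?_
    rw [natDegree_comp, descPochhammer_natDegree, natDegree_X_add_C, mul_one]
  · simp

lemma polyBinom_coeff_top (a : ℤ) {b : ℤ} (hb : 0 ≤ b) :
    (polyBinom a b).coeff b.toNat = ((b.toNat).factorial : ℚ)⁻¹ := by
  unfold polyBinom
  rw [if_pos hb, coeff_smul]
  have hm : ((descPochhammer ℚ b.toNat).comp (X + C (a:ℚ))).Monic := by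
    have h1 : (X + C (a:ℚ)).Monic := monic_X_add_C _
    have := (monic_descPochhammer ℚ b.toNat)
    exact Monic.comp this h1 (by rw [natDegree_X_add_C]; omega)
  have hdeg : ((descPochhammer ℚ b.toNat).comp (X + C (a:ℚ))).natDegree = b.toNat := by
    rw [natDegree_comp, descPochhammer_natDegree, natDegree_X_add_C, mul_one]
  have h2 := Monic.coeff_natDegree hm
  rw [hdeg] at h2
  rw [h2, smul_eq_mul, mul_one]

lemma card_filter_val_lt (n k : ℕ) :
    ((univ : Finset (Fin n)).filter (fun i : Fin n => (i:ℕ) < k)).card = min k n := by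
  rcases lt_or_ge k n with h | h
  · rw [min_eq_left (le_of_lt h)]
    have heq : (univ : Finset (Fin n)).filter (fun i : Fin n => (i:ℕ) < k)
        = Finset.Iio (⟨k, h⟩ : Fin n) := by
      ext i; simp [Fin.lt_def]
    rw [heq, Fin.card_Iio]
  · rw [min_eq_right h]
    have hall : ∀ i ∈ (univ : Finset (Fin n)), (i:ℕ) < k :=
      fun i _ => lt_of_lt_of_le i.isLt h
    rw [Finset.filter_eq_self.mpr hall]
    simp [Finset.card_univ]

lemma downset_mem {n : ℕ} {s : Finset (Fin n)}
    (hs : ∀ i j : Fin n, j ≤ i → i ∈ s → j ∈ s) (i : Fin n) : i ∈ s ↔ (i:ℕ) < s.card := by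
  constructor
  · intro hi
    have hsub : Finset.Iic i ⊆ s := fun j hj => hs i j (Finset.mem_Iic.mp hj) hi
    have := Finset.card_le_card hsub
    rw [Fin.card_Iic] at this
    omega
  · intro hlt
    by_contra hi
    have hsub : s ⊆ Finset.Iio i := by
      intro j hj
      rw [Finset.mem_Iio]
      by_contra hij
      exact hi (hs j i (le_of_not_gt hij) hj)
    have := Finset.card_le_card hsub
    rw [Fin.card_Iio] at this
    omega

noncomputable def gSum (o : ℤ) (r : ℕ) (b : Fin r → ℤ) : Polynomial ℚ :=
  ∑ j : Fin r, polyBinom (b j - (((j:ℕ):ℤ) + o)) (b j)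

lemma gSum_key (o : ℤ) (n : ℕ) (b : Fin (n+1) → ℤ) (hmono : Antitone b)
    (hpos : ∀ j, 0 ≤ b j) :
    (gSum o (n+1) b).natDegree = (b 0).toNat ∧ gSum o (n+1) b ≠ 0 := by
  set D := (b 0).toNat with hD
  have hle : ∀ j : Fin (n+1), (b j).toNat ≤ D := by
    intro j
    have := hmono (Fin.zero_le j)
    omega
  have hdegle : (gSum o (n+1) b).natDegree ≤ D :=
    Polynomial.natDegree_sum_le_of_forall_le _ _ (fun j _ =>
      le_trans (polyBinom_natDegree_le _ _) (hle j))
  have hcoeff : 0 < (gSum o (n+1) b).coeff D := by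
    rw [gSum, Polynomial.finset_sum_coeff]
    apply Finset.sum_pos'
    · intro j _
      rcases eq_or_lt_of_le (hle j) with hj | hj
      · rw [show D = (b j).toNat from hj.symm, polyBinom_coeff_top _ (hpos j)]
        positivity
      · rw [Polynomial.coeff_eq_zero_of_natDegree_lt
          (lt_of_le_of_lt (polyBinom_natDegree_le _ _) hj)]
    · refine ⟨0, Finset.mem_univ _, ?_⟩
      rw [hD, polyBinom_coeff_top _ (hpos 0)]
      positivity
  have hne : gSum o (n+1) b ≠ 0 := by
    intro h
    rw [h] at hcoeff
    simp at hcoeff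
  exact ⟨le_antisymm hdegle (Polynomial.le_natDegree_of_ne_zero (ne_of_gt hcoeff)), hne⟩

lemma gSum_split (o : ℤ) (n : ℕ) (b : Fin (n+1) → ℤ) :
    gSum o (n+1) b = polyBinom (b 0 - o) (b 0) + gSum (o+1) n (b ∘ Fin.succ) := by
  rw [gSum, Fin.sum_univ_succ]
  congr 1
  · norm_num
  · rw [gSum]
    refine Finset.sum_congr rfl fun j _ => ?_
    have : ((j.succ : ℕ) : ℤ) + o = ((j : ℕ) : ℤ) + (o + 1) := by
      push_cast [Fin.val_succ]; ring
    rw [this]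
    rfl

lemma gSum_unique (r₁ : ℕ) : ∀ (o : ℤ) (r₂ : ℕ) (b₁ : Fin r₁ → ℤ) (b₂ : Fin r₂ → ℤ),
    Antitone b₁ → (∀ j, 0 ≤ b₁ j) → Antitone b₂ → (∀ j, 0 ≤ b₂ j) →
    gSum o r₁ b₁ = gSum o r₂ b₂ →
    ∃ h : r₁ = r₂, ∀ j : Fin r₁, b₁ j = b₂ (Fin.cast h j) := by
  induction r₁ with
  | zero =>
    intro o r₂ b₁ b₂ _ _ h2m h2p heq
    have h0 : gSum o 0 b₁ = 0 := by simp [gSum]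
    cases r₂ with
    | zero => exact ⟨rfl, fun j => j.elim0⟩
    | succ m =>
      exfalso
      exact (gSum_key o m b₂ h2m h2p).2 (by rw [← heq, h0])
  | succ n ih =>
    intro o r₂ b₁ b₂ h1m h1p h2m h2p heq
    cases r₂ with
    | zero =>
      exfalso
      exact (gSum_key o n b₁ h1m h1p).2 (by rw [heq]; simp [gSum])
    | succ m =>
      have k1 := gSum_key o n b₁ h1m h1p
      have k2 := gSum_key o m b₂ h2m h2p
      have hD : (b₁ 0).toNat = (b₂ 0).toNat := by rw [← k1.1, ← k2.1, heq]
      have hb0 : b₁ 0 = b₂ 0 := by have := h1p 0; have := h2p 0; omega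
      rw [gSum_split, gSum_split, hb0] at heq
      have heq' : gSum (o+1) n (b₁ ∘ Fin.succ) = gSum (o+1) m (b₂ ∘ Fin.succ) :=
        add_left_cancel heq
      have h1m' : Antitone (b₁ ∘ Fin.succ) := fun i j hij =>
        h1m (Fin.succ_le_succ_iff.mpr hij)
      have h2m' : Antitone (b₂ ∘ Fin.succ) := fun i j hij =>
        h2m (Fin.succ_le_succ_iff.mpr hij)
      obtain ⟨hr, hb⟩ := ih (o+1) m (b₁ ∘ Fin.succ) (b₂ ∘ Fin.succ) h1m'
        (fun j => h1p _) h2m' (fun j => h2p _) heq'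
      subst hr
      refine ⟨rfl, fun j => ?_⟩
      induction j using Fin.cases with
      | zero => simpa using hb0
      | succ j =>
        have := hb j
        exact this

lemma gotzmannSum_eq_gSum (r : ℕ) (b : Fin r → ℤ) : gotzmannSum r b = gSum 0 r b := by
  unfold gotzmannSum gSum
  refine Finset.sum_congr rfl fun j _ => ?_
  norm_num

lemma downset_sum {M : Type*} [AddCommMonoid M] {n : ℕ} {s : Finset (Fin n)}
    (hs : ∀ i j : Fin n, j ≤ i → i ∈ s → j ∈ s) (g : ℕ → M) :
    ∑ i ∈ s, g (i:ℕ) = ∑ k ∈ range s.card, g k := by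
  have hcard : s.card ≤ n := (Finset.card_le_univ s).trans_eq (by simp)
  refine Finset.sum_bij' (fun a _ => (a : ℕ)) (fun k hk => (⟨k, by
      rw [Finset.mem_range] at hk; omega⟩ : Fin n)) ?_ ?_ ?_ ?_ ?_
  · intro a ha
    rw [Finset.mem_range]
    exact (downset_mem hs a).mp ha
  · intro k hk
    rw [Finset.mem_range] at hk
    exact (downset_mem hs _).mpr hk
  · intro a ha; rfl
  · intro k hk; rfl
  · intro a ha; rfl

section Conj
variable (d : ℕ) (e : Fin (d+1) → ℤ)

def conjC (k : ℕ) : Finset (Fin (d+1)) :=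
  univ.filter (fun i : Fin (d+1) => (k:ℤ) < e i)

def conjB (k : ℕ) : ℤ := ((conjC d e k).card : ℤ) - 1

variable {d e}

lemma conjC_downset (he : Antitone e) (k : ℕ) :
    ∀ i j : Fin (d+1), j ≤ i → i ∈ conjC d e k → j ∈ conjC d e k := by
  intro i j hji hi
  simp only [conjC, Finset.mem_filter, Finset.mem_univ, true_and] at hi ⊢
  exact lt_of_lt_of_le hi (he hji)

lemma conjB_nonneg (k : ℕ) (hk : (k:ℤ) < e 0) : 0 ≤ conjB d e k := by
  have h0 : (0 : Fin (d+1)) ∈ conjC d e k := by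
    simp [conjC, hk]
  have : 0 < (conjC d e k).card := Finset.card_pos.mpr ⟨0, h0⟩
  unfold conjB; omega

lemma conjB_anti : Antitone (conjB d e) := by
  intro k k' hkk
  have hsub : conjC d e k' ⊆ conjC d e k := by
    intro i hi
    simp only [conjC, Finset.mem_filter, Finset.mem_univ, true_and] at hi ⊢
    omega
  have := Finset.card_le_card hsub
  unfold conjB; omega

lemma mh_eq_gotz (he : Antitone e) (hp : ∀ i, 0 < e i) :
    mhSum d e = gotzmannSum (e 0).toNat (fun j => conjB d e (j:ℕ)) := by
  unfold mhSum
  have step1 : ∀ i ∈ (univ : Finset (Fin (d+1))),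
      polyBinom ((i:ℕ):ℤ) (((i:ℕ):ℤ)+1) - polyBinom (((i:ℕ):ℤ) - e i) (((i:ℕ):ℤ)+1)
        = ∑ k ∈ range (e i).toNat, polyBinom (((i:ℕ):ℤ) - ((k:ℤ)+1)) ((i:ℕ):ℤ) := by
    intro i _
    have h := polyBinom_telescope ((i:ℕ):ℤ) (e i).toNat
    rwa [Int.toNat_of_nonneg (le_of_lt (hp i))] at h
  rw [Finset.sum_congr rfl step1]
  rw [Finset.sum_comm' (t' := range (e 0).toNat) (s' := fun k => conjC d e k) ?hcomm]
  case hcomm =>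
    intro i k
    simp only [Finset.mem_univ, true_and, Finset.mem_range, conjC, Finset.mem_filter,
      ← Int.lt_toNat]
    constructor
    · intro h
      have : e i ≤ e 0 := he (Fin.zero_le i)
      constructor
      · omega
      · omega
    · exact fun h => h.1
  rw [gotzmannSum, Fin.sum_univ_eq_sum_range
    (fun k => polyBinom (conjB d e k - (k:ℤ)) (conjB d e k))]
  refine Finset.sum_congr rfl fun k _ => ?_
  have hds := conjC_downset he k
  have hinner := downset_sum hds (fun i => polyBinom ((i:ℤ) - ((k:ℤ)+1)) (i:ℤ))
  rw [hinner]
  have hh := polyBinom_hockey (-((k:ℤ)+1)) (conjC d e k).card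
  have h1 : ∀ k' ∈ range (conjC d e k).card,
      polyBinom ((k':ℤ) - ((k:ℤ)+1)) (k':ℤ) = polyBinom ((k':ℤ) + (-((k:ℤ)+1))) (k':ℤ) := by
    intro k' _; rw [sub_eq_add_neg]
  rw [Finset.sum_congr rfl h1, hh]
  unfold conjB
  congr 1 <;> ring
end Conj

section Conj2
variable {d : ℕ} {e : Fin (d+1) → ℤ}

lemma conjB_zero (hp : ∀ i, 0 < e i) : conjB d e 0 = (d : ℤ) := by
  have hC : conjC d e 0 = univ := by
    ext i
    simp [conjC, hp i]
  unfold conjB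
  rw [hC]
  simp [Finset.card_univ]

lemma conj_recover (he : Antitone e) (hp : ∀ i, 0 < e i) (i : Fin (d+1)) :
    (((univ : Finset (Fin (e 0).toNat)).filter
      (fun j : Fin (e 0).toNat => ((i:ℕ):ℤ) ≤ conjB d e (j:ℕ))).card : ℤ) = e i := by
  have hpred : ∀ j : Fin (e 0).toNat,
      (((i:ℕ):ℤ) ≤ conjB d e (j:ℕ)) ↔ ((j:ℕ) < (e i).toNat) := by
    intro j
    have hmem := downset_mem (conjC_downset he (j:ℕ)) i
    unfold conjB
    rw [Int.lt_toNat]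
    constructor
    · intro h
      have hin : i ∈ conjC d e (j:ℕ) := hmem.mpr (by omega)
      simp only [conjC, Finset.mem_filter, Finset.mem_univ, true_and] at hin
      omega
    · intro h
      have hin : i ∈ conjC d e (j:ℕ) := by
        simp only [conjC, Finset.mem_filter, Finset.mem_univ, true_and]
        omega
      have := hmem.mp hin
      omega
  have heq : (univ : Finset (Fin (e 0).toNat)).filter (fun j : Fin (e 0).toNat => ((i:ℕ):ℤ) ≤ conjB d e (j:ℕ))
      = (univ : Finset (Fin (e 0).toNat)).filter (fun j : Fin (e 0).toNat => (j:ℕ) < (e i).toNat) := by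
    apply Finset.filter_congr
    intro j _
    simp [hpred j]
  rw [heq, card_filter_val_lt]
  have h1 : e i ≤ e 0 := he (Fin.zero_le i)
  have := hp i
  have := hp 0
  rw [min_eq_left (by omega)]
  omega
end Conj2

section Reverse
variable {n : ℕ} {b : Fin (n+1) → ℤ}

/-- the conjugate `e` built from a Gotzmann sequence -/
def revE (b : Fin (n+1) → ℤ) : Fin ((b 0).toNat + 1) → ℤ :=
  fun i => (((univ : Finset (Fin (n+1))).filter (fun j : Fin (n+1) => ((i:ℕ):ℤ) ≤ b j)).card : ℤ)

lemma revE_anti (hb : Antitone b) : Antitone (revE b) := by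
  intro i i' hii
  unfold revE
  have hsub : (univ : Finset (Fin (n+1))).filter (fun j : Fin (n+1) => ((i':ℕ):ℤ) ≤ b j)
      ⊆ (univ : Finset (Fin (n+1))).filter (fun j : Fin (n+1) => ((i:ℕ):ℤ) ≤ b j) := by
    intro j hj
    simp only [Finset.mem_filter, Finset.mem_univ, true_and] at hj ⊢
    have : (i:ℕ) ≤ (i':ℕ) := hii
    omega
  exact_mod_cast Finset.card_le_card hsub

lemma revE_pos (hnn : ∀ j, 0 ≤ b j) (i : Fin ((b 0).toNat + 1)) : 0 < revE b i := by
  have h0 : (0 : Fin (n+1)) ∈ (univ : Finset (Fin (n+1))).filter (fun j : Fin (n+1) => ((i:ℕ):ℤ) ≤ b j) := by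
    simp only [Finset.mem_filter, Finset.mem_univ, true_and]
    have : (i:ℕ) ≤ (b 0).toNat := by omega
    have := hnn 0
    omega
  have := Finset.card_pos.mpr ⟨0, h0⟩
  unfold revE
  exact_mod_cast this

lemma revE_zero (hnn : ∀ j, 0 ≤ b j) : revE b 0 = (n:ℤ) + 1 := by
  unfold revE
  have h : ((univ : Finset (Fin (n+1))).filter
      (fun j : Fin (n+1) => (((0 : Fin ((b 0).toNat + 1)):ℕ):ℤ) ≤ b j)) = univ := by
    ext j; simpa using hnn j
  rw [h]
  simp [Finset.card_univ]

lemma revE_conjB (hb : Antitone b) (hnn : ∀ j, 0 ≤ b j) (j : Fin (n+1)) :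
    conjB (b 0).toNat (revE b) (j:ℕ) = b j := by
  have hC : conjC (b 0).toNat (revE b) (j:ℕ)
      = (univ : Finset (Fin ((b 0).toNat + 1))).filter (fun i : Fin ((b 0).toNat + 1) => ((i:ℕ):ℤ) ≤ b j) := by
    ext i
    simp only [conjC, Finset.mem_filter, Finset.mem_univ, true_and]
    unfold revE
    set S := (univ : Finset (Fin (n+1))).filter (fun j0 : Fin (n+1) => ((i:ℕ):ℤ) ≤ b j0) with hS
    have hdown : ∀ a a' : Fin (n+1), a' ≤ a → a ∈ S → a' ∈ S := by
      intro a a' haa ha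
      simp only [hS, Finset.mem_filter, Finset.mem_univ, true_and] at ha ⊢
      exact le_trans ha (hb haa)
    have hmem := downset_mem hdown j
    simp only [hS, Finset.mem_filter, Finset.mem_univ, true_and] at hmem
    constructor
    · intro h
      exact hmem.mpr (by exact_mod_cast h)
    · intro h
      have := hmem.mp h
      exact_mod_cast this
  have hcount : ((univ : Finset (Fin ((b 0).toNat + 1))).filter
      (fun i : Fin ((b 0).toNat + 1) => ((i:ℕ):ℤ) ≤ b j)).card = (b j).toNat + 1 := by
    have hpred : ∀ i : Fin ((b 0).toNat + 1), (((i:ℕ):ℤ) ≤ b j) ↔ ((i:ℕ) < (b j).toNat + 1) := by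
      intro i
      have := hnn j
      omega
    have heq2 : (univ : Finset (Fin ((b 0).toNat + 1))).filter (fun i : Fin ((b 0).toNat + 1) => ((i:ℕ):ℤ) ≤ b j)
        = (univ : Finset (Fin ((b 0).toNat + 1))).filter
            (fun i : Fin ((b 0).toNat + 1) => (i:ℕ) < (b j).toNat + 1) := by
      apply Finset.filter_congr
      intro i _
      simp [hpred i]
    rw [heq2, card_filter_val_lt]
    have : b j ≤ b 0 := hb (Fin.zero_le j)
    have := hnn j
    rw [min_eq_left (by omega)]
  unfold conjB
  rw [hC, hcount]
  have := hnn j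
  omega
end Reverse

lemma gotz_congr {r₁ r₂ : ℕ} (h : r₁ = r₂) {b₁ : Fin r₁ → ℤ} {b₂ : Fin r₂ → ℤ}
    (hb : ∀ j : Fin r₁, b₁ j = b₂ (Fin.cast h j)) : gotzmannSum r₁ b₁ = gotzmannSum r₂ b₂ := by
  subst h
  have : b₁ = b₂ := funext fun j => by simpa using hb j
  rw [this]

lemma card_filter_cast {r₁ r₂ : ℕ} (h : r₁ = r₂) (p₁ : Fin r₁ → Prop) (p₂ : Fin r₂ → Prop)
    [DecidablePred p₁] [DecidablePred p₂] (hp : ∀ j : Fin r₁, p₁ j ↔ p₂ (Fin.cast h j)) :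
    ((univ : Finset (Fin r₁)).filter p₁).card = ((univ : Finset (Fin r₂)).filter p₂).card := by
  subst h
  have hfil : (univ : Finset (Fin r₁)).filter p₁ = univ.filter p₂ :=
    Finset.filter_congr (fun j _ => by simpa using hp j)
  rw [hfil]

/-- A polynomial `p ∈ ℚ[t]` admits a Macaulay–Hartshorne expression iff it admits a
Gotzmann expression, and each kind of expression is unique. -/
theorem statement_0 (p : Polynomial ℚ) :
    ((∃ d : ℕ, ∃ e : Fin (d + 1) → ℤ, Antitone e ∧ (∀ i, 0 < e i) ∧ p = mhSum d e) ↔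
      (∃ r : ℕ, 0 < r ∧ ∃ b : Fin r → ℤ, Antitone b ∧ (∀ j, 0 ≤ b j) ∧ p = gotzmannSum r b)) ∧
    (∀ (d₁ d₂ : ℕ) (e₁ : Fin (d₁ + 1) → ℤ) (e₂ : Fin (d₂ + 1) → ℤ),
      Antitone e₁ → (∀ i, 0 < e₁ i) → Antitone e₂ → (∀ i, 0 < e₂ i) →
      mhSum d₁ e₁ = mhSum d₂ e₂ →
      ∃ h : d₁ = d₂, ∀ i : Fin (d₁ + 1), e₁ i = e₂ (Fin.cast (by rw [h]) i)) ∧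
    (∀ (r₁ r₂ : ℕ) (b₁ : Fin r₁ → ℤ) (b₂ : Fin r₂ → ℤ),
      Antitone b₁ → (∀ j, 0 ≤ b₁ j) → Antitone b₂ → (∀ j, 0 ≤ b₂ j) →
      gotzmannSum r₁ b₁ = gotzmannSum r₂ b₂ →
      ∃ h : r₁ = r₂, ∀ j : Fin r₁, b₁ j = b₂ (Fin.cast h j)) := by
  have huniq : ∀ (r₁ r₂ : ℕ) (b₁ : Fin r₁ → ℤ) (b₂ : Fin r₂ → ℤ),
      Antitone b₁ → (∀ j, 0 ≤ b₁ j) → Antitone b₂ → (∀ j, 0 ≤ b₂ j) →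
      gotzmannSum r₁ b₁ = gotzmannSum r₂ b₂ →
      ∃ h : r₁ = r₂, ∀ j : Fin r₁, b₁ j = b₂ (Fin.cast h j) := by
    intro r₁ r₂ b₁ b₂ h1 h2 h3 h4 heq
    rw [gotzmannSum_eq_gSum, gotzmannSum_eq_gSum] at heq
    exact gSum_unique r₁ 0 r₂ b₁ b₂ h1 h2 h3 h4 heq
  have hforward : ∀ (d : ℕ) (e : Fin (d+1) → ℤ), Antitone e → (∀ i, 0 < e i) →
      (0 < (e 0).toNat ∧ Antitone (fun j : Fin (e 0).toNat => conjB d e (j:ℕ)) ∧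
        (∀ j : Fin (e 0).toNat, 0 ≤ conjB d e (j:ℕ)) ∧
        mhSum d e = gotzmannSum (e 0).toNat (fun j => conjB d e (j:ℕ))) := by
    intro d e he hp
    refine ⟨?_, ?_, ?_, mh_eq_gotz he hp⟩
    · have := hp 0; omega
    · intro i j hij
      exact conjB_anti (show (i:ℕ) ≤ (j:ℕ) from hij)
    · intro j
      exact conjB_nonneg (j:ℕ) (Int.lt_toNat.mp j.isLt)
  refine ⟨⟨?_, ?_⟩, ?_, huniq⟩
  · rintro ⟨d, e, he, hp, rfl⟩
    obtain ⟨h1, h2, h3, h4⟩ := hforward d e he hp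
    exact ⟨(e 0).toNat, h1, _, h2, h3, h4⟩
  · rintro ⟨r, hr, b, hbm, hbn, rfl⟩
    obtain ⟨n, rfl⟩ : ∃ n, r = n + 1 := ⟨r - 1, by omega⟩
    refine ⟨(b 0).toNat, revE b, revE_anti hbm, fun i => revE_pos hbn i, ?_⟩
    rw [mh_eq_gotz (revE_anti hbm) (fun i => revE_pos hbn i)]
    have hzero : (revE b 0).toNat = n + 1 := by rw [revE_zero hbn]; omega
    exact gotz_congr hzero.symm (fun j => by
      simpa using (revE_conjB hbm hbn j).symm)
  · intro d₁ d₂ e₁ e₂ h1m h1p h2m h2p heq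
    obtain ⟨q11, q12, q13, q14⟩ := hforward d₁ e₁ h1m h1p
    obtain ⟨q21, q22, q23, q24⟩ := hforward d₂ e₂ h2m h2p
    rw [q14, q24] at heq
    obtain ⟨hr, hB⟩ := huniq _ _ _ _ q12 q13 q22 q23 heq
    have hd : d₁ = d₂ := by
      have hB0 := hB ⟨0, q11⟩
      have c1 : conjB d₁ e₁ ((⟨0, q11⟩ : Fin (e₁ 0).toNat):ℕ) = (d₁:ℤ) := conjB_zero h1p
      have c2 : conjB d₂ e₂ ((Fin.cast hr ⟨0, q11⟩ : Fin (e₂ 0).toNat):ℕ) = (d₂:ℤ) :=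
        conjB_zero h2p
      rw [c1, c2] at hB0
      exact_mod_cast hB0
    subst hd
    refine ⟨rfl, fun i => ?_⟩
    have r1 := conj_recover h1m h1p i
    have r2 := conj_recover h2m h2p i
    have hcast : (Fin.cast (by rw [(rfl : d₁ = d₁)]) i : Fin (d₁+1)) = i := rfl
    rw [hcast]
    have hcards : ((univ : Finset (Fin (e₁ 0).toNat)).filter
          (fun j : Fin (e₁ 0).toNat => ((i:ℕ):ℤ) ≤ conjB d₁ e₁ (j:ℕ))).card
        = ((univ : Finset (Fin (e₂ 0).toNat)).filter
          (fun j : Fin (e₂ 0).toNat => ((i:ℕ):ℤ) ≤ conjB d₁ e₂ (j:ℕ))).card := by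
      apply card_filter_cast hr
      intro j
      rw [hB j]
    rw [← r1, ← r2, hcards]
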